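/- Let A be a simple unital C*-algebra, α : ℝ → Aut(A) a one-parameter group, and u, u' two α-cocycles with Ad(u_t) α_t = Ad(u'_t) α_t for all t. Then there exists p ∈ ℝ such that u'_t = e^{ipt} u_t for all t. -/

import Mathlib

open intervalIntegral Complex

lemma char_classify (c : ℝ → ℂ) (hcont : Continuous c) (h0 : c 0 = 1)
    (hmul : ∀ s t, c (s + t) = c s * c t) (hnorm : ∀ t, ‖c t‖ = 1) :
    ∃ p : ℝ, ∀ t : ℝ, c t = Complex.exp (Complex.I * p * t) := by
  -- find δ with re (c s) > 1/2 on [0, δ]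
  obtain ⟨ε, hε, hball⟩ := Metric.continuousAt_iff.mp hcont.continuousAt (1/2) (by norm_num)
  set δ : ℝ := ε / 2 with hδdef
  have hδ : 0 < δ := by positivity
  have hre : ∀ s ∈ Set.Icc (0:ℝ) δ, (1:ℝ)/2 < (c s).re := by
    intro s hs
    have hd : dist s 0 < ε := by
      rw [Real.dist_eq, sub_zero, _root_.abs_of_nonneg hs.1]
      calc s ≤ δ := hs.2
      _ < ε := by rw [hδdef]; linarith
    have := hball hd
    rw [h0, dist_eq_norm] at this
    have h1 : |(c s - 1).re| ≤ ‖c s - 1‖ := Complex.abs_re_le_norm _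
    have : (c s).re - 1 = (c s - 1).re := by simp
    nlinarith [abs_le.mp h1]
  set K : ℂ := ∫ s in (0:ℝ)..δ, c s with hK
  have hKre : (0:ℝ) < K.re := by
    have : K.re = ∫ s in (0:ℝ)..δ, (c s).re := by
      rw [hK]
      exact (Complex.reCLM.intervalIntegral_comp_comm
        (hcont.intervalIntegrable _ _)).symm
    rw [this]
    apply intervalIntegral_pos_of_pos_on
    · exact (Complex.continuous_re.comp hcont).intervalIntegrable _ _
    · intro x hx; exact lt_trans (by norm_num) (hre x ⟨le_of_lt hx.1, le_of_lt hx.2⟩)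
    · exact hδ
  have hKne : K ≠ 0 := fun h => by simp [h] at hKre
  set F : ℝ → ℂ := fun x => ∫ s in (0:ℝ)..x, c s with hF
  have hFd : ∀ x : ℝ, HasDerivAt F (c x) x := fun x =>
    integral_hasDerivAt_right (hcont.intervalIntegrable _ _)
      hcont.aestronglyMeasurable.stronglyMeasurableAtFilter hcont.continuousAt
  have key : ∀ t, c t = (F (t + δ) - F t) * K⁻¹ := by
    intro t
    have h1 : c t * K = ∫ s in (0:ℝ)..δ, c (t + s) := by
      rw [hK, ← integral_const_mul]
      congr 1; ext s; rw [hmul]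
    have h2 : (∫ s in (0:ℝ)..δ, c (t + s)) = ∫ s in t..(t + δ), c s := by
      simpa using integral_comp_add_left (a := (0:ℝ)) (b := δ) c t
    have h3 : F t + (∫ s in t..(t+δ), c s) = F (t + δ) :=
      integral_add_adjacent_intervals (hcont.intervalIntegrable _ _)
        (hcont.intervalIntegrable _ _)
    have : c t * K = F (t + δ) - F t := by rw [h1, h2, ← h3]; ring
    field_simp [hKne] at this ⊢
    linear_combination this
  set a : ℂ := (c δ - 1) * K⁻¹ with ha
  have hcd : ∀ t, HasDerivAt c (a * c t) t := by
    intro t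
    have hd1 : HasDerivAt (fun t : ℝ => (F (t + δ) - F t) * K⁻¹)
        ((c (t + δ) - c t) * K⁻¹) t := by
      refine HasDerivAt.mul_const ?_ _
      have hF2 : HasDerivAt (fun s : ℝ => F (s + δ)) (c (t + δ)) t := by
        have h := HasDerivAt.scomp (𝕜 := ℝ) t (hFd (t + δ)) ((hasDerivAt_id t).add_const δ)
        simpa [Function.comp_def] using h
      exact hF2.sub (hFd t)
    have heq : (fun t : ℝ => (F (t + δ) - F t) * K⁻¹) = c := by
      ext t; exact (key t).symm
    rw [heq] at hd1
    convert hd1 using 1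
    rw [hmul t δ, ha]; ring
  -- now ODE
  have hexp : ∀ t : ℝ, HasDerivAt (fun t : ℝ => Complex.exp (-(a * t)))
      (-a * Complex.exp (-(a * t))) t := by
    intro t
    have h1 : HasDerivAt (fun t : ℝ => -(a * (t:ℂ))) (-a) t := by
      have := (Complex.ofRealCLM.hasDerivAt (x := t)).const_mul a
      simpa [Pi.neg_def] using this.neg
    simpa [mul_comm] using h1.cexp
  have hg : ∀ t : ℝ, HasDerivAt (fun t : ℝ => Complex.exp (-(a * t)) * c t) 0 t := by
    intro t
    have := (hexp t).mul (hcd t)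
    exact this.congr_deriv (by ring)
  have hconst : ∀ t : ℝ, Complex.exp (-(a * t)) * c t = 1 := by
    intro t
    have := is_const_of_deriv_eq_zero (f := fun t : ℝ => Complex.exp (-(a * t)) * c t)
      (fun x => (hg x).differentiableAt) (fun x => (hg x).deriv) t 0
    simpa [h0] using this
  have hct : ∀ t : ℝ, c t = Complex.exp (a * t) := by
    intro t
    have h := hconst t
    have : Complex.exp (a * t) * (Complex.exp (-(a * t)) * c t) = Complex.exp (a * t) := by
      rw [h, mul_one]
    rwa [← mul_assoc, ← Complex.exp_add, add_neg_cancel, Complex.exp_zero, one_mul] at this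
  have hare : a.re = 0 := by
    have h1 := hnorm 1
    rw [hct 1, Complex.norm_exp] at h1
    have h2 : Real.exp (a.re * 1) = 1 := by simpa using h1
    simpa using h2
  obtain ⟨p, hp⟩ : ∃ p : ℝ, a = Complex.I * p :=
    ⟨a.im, by apply Complex.ext <;> simp [hare]⟩
  refine ⟨p, fun t => ?_⟩
  rw [hct t, hp, mul_assoc]

lemma central_scalar {A : Type*} [CStarAlgebra A] [Nontrivial A]
    (hsimple : ∀ I : TwoSidedIdeal A, IsClosed (I : Set A) → I = ⊥ ∨ I = ⊤)
    (z : A) (hz : ∀ y, z * y = y * z) : ∃ μ : ℂ, z = μ • (1 : A) := by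
  obtain ⟨μ, hμ⟩ := spectrum.nonempty z
  refine ⟨μ, ?_⟩
  set c : A := z - μ • 1 with hcdef
  have hcc : ∀ y, c * y = y * c := by
    intro y
    simp only [hcdef, sub_mul, mul_sub, hz, smul_mul_assoc, mul_smul_comm, one_mul, mul_one]
  have hcnu : ¬ IsUnit c := by
    rw [spectrum.mem_iff] at hμ
    intro h
    apply hμ
    have : c = -((algebraMap ℂ A) μ - z) := by
      rw [hcdef, Algebra.algebraMap_eq_smul_one, neg_sub]
    rw [← neg_neg ((algebraMap ℂ A) μ - z), ← this]
    exact h.neg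
  set S : Set A := closure (Set.range (fun a => c * a)) with hS
  have hmem : ∀ {x y : A}, y ∈ S → x * y ∈ S ∧ y * x ∈ S := by
    intro x y hy
    constructor
    · have : Set.MapsTo (fun w => x * w) (Set.range (fun a => c * a)) (Set.range (fun a => c * a)) := by
        rintro w ⟨a, rfl⟩
        exact ⟨x * a, show c * (x * a) = x * (c * a) by rw [← mul_assoc, hcc, mul_assoc]⟩
      exact map_mem_closure (continuous_mul_left x) hy this
    · have : Set.MapsTo (fun w => w * x) (Set.range (fun a => c * a)) (Set.range (fun a => c * a)) := by
        rintro w ⟨a, rfl⟩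
        exact ⟨a * x, show c * (a * x) = (c * a) * x from (mul_assoc _ _ _).symm⟩
      exact map_mem_closure (f := fun w => w * x) (continuous_mul_right x) hy this
  have hadd : ∀ {x y : A}, x ∈ S → y ∈ S → x + y ∈ S := by
    intro x y hx hy
    have : Set.MapsTo (fun p : A × A => p.1 + p.2)
        (Set.range (fun a => c * a) ×ˢ Set.range (fun a => c * a))
        (Set.range (fun a => c * a)) := by
      rintro ⟨w1, w2⟩ ⟨⟨a, rfl⟩, ⟨b, rfl⟩⟩
      exact ⟨a + b, by simp [mul_add]⟩
    have h2 := map_mem_closure continuous_add (show (x,y) ∈ closure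
      (Set.range (fun a => c * a) ×ˢ Set.range (fun a => c * a)) by
        rw [closure_prod_eq]; exact ⟨hx, hy⟩) this
    exact h2
  have hneg : ∀ {x : A}, x ∈ S → -x ∈ S := by
    intro x hx
    have : Set.MapsTo (fun w : A => -w) (Set.range (fun a => c * a)) (Set.range (fun a => c * a)) := by
      rintro w ⟨a, rfl⟩; exact ⟨-a, by simp⟩
    exact map_mem_closure continuous_neg hx this
  have hzero : (0 : A) ∈ S := subset_closure ⟨0, by simp⟩
  set I : TwoSidedIdeal A := TwoSidedIdeal.mk' S hzero hadd hneg
    (fun h => (hmem h).1) (fun h => (hmem h).2) with hI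
  have hIS : (I : Set A) = S := TwoSidedIdeal.coe_mk' _ _ _ _ _ _
  have hcI : c ∈ S := subset_closure ⟨1, by simp⟩
  rcases hsimple I (by rw [hIS]; exact isClosed_closure) with hbot | htop
  · have : c ∈ I := by
      rw [TwoSidedIdeal.mem_mk']; exact hcI
    rw [hbot, TwoSidedIdeal.mem_bot] at this
    rw [← sub_eq_zero, ← hcdef]; exact this
  · exfalso
    have h1 : (1 : A) ∈ S := by
      have : (1 : A) ∈ I := by rw [htop]; exact TwoSidedIdeal.mem_top _
      rwa [TwoSidedIdeal.mem_mk'] at this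
    obtain ⟨y, hyr, hy1⟩ := Metric.mem_closure_iff.mp h1 1 one_pos
    obtain ⟨a, rfl⟩ := hyr
    have hyu : IsUnit (c * a) := by
      have h' : ‖1 - c * a‖ < 1 := by simpa [dist_eq_norm] using hy1
      have := isUnit_one_sub_of_norm_lt_one h'
      simpa using this
    obtain ⟨v, hv⟩ := hyu
    apply hcnu
    have hv1 : c * (a * ↑v⁻¹) = 1 := by
      rw [← mul_assoc, ← hv]
      exact v.mul_inv
    refine ⟨⟨c, a * ↑v⁻¹, hv1, ?_⟩, rfl⟩
    rw [← hcc]; exact hv1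

/-- In a simple unital C*-algebra, two continuous α-cocycles implementing the
same cocycle perturbation of `α` differ by a character: `u'_t = e^{ipt} u_t`. -/
theorem stmt15 {A : Type*} [CStarAlgebra A]
    (hsimple : ∀ I : TwoSidedIdeal A, IsClosed (I : Set A) → I = ⊥ ∨ I = ⊤)
    (α : ℝ → (A ≃⋆ₐ[ℂ] A)) (hα : ∀ s t x, α (s + t) x = α s (α t x))
    (u u' : ℝ → A) (hucont : Continuous u) (hu'cont : Continuous u')
    (hu : ∀ t, u t ∈ unitary A) (hu' : ∀ t, u' t ∈ unitary A)
    (hc : ∀ s t, u (s + t) = u s * α s (u t))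
    (hc' : ∀ s t, u' (s + t) = u' s * α s (u' t))
    (had : ∀ t x, u t * α t x * star (u t) = u' t * α t x * star (u' t)) :
    ∃ p : ℝ, ∀ t, u' t = Complex.exp (Complex.I * p * t) • u t := by
  rcases subsingleton_or_nontrivial A with hA | hA
  · exact ⟨0, fun t => Subsingleton.elim _ _⟩
  -- α 0 = id
  have hα0 : ∀ x : A, α 0 x = x := by
    intro x
    have h : α 0 (α 0 x) = α 0 x := by
      have := hα 0 0 x
      simpa using this.symm
    exact (α 0).injective h
  -- u 0 = 1, u' 0 = 1
  have huIsUnit : ∀ t, IsUnit (u t) := fun t =>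
    ⟨⟨u t, star (u t), (Unitary.mem_iff.mp (hu t)).2, (Unitary.mem_iff.mp (hu t)).1⟩, rfl⟩
  have hu0 : u 0 = 1 := by
    have h : u 0 * 1 = u 0 * u 0 := by
      rw [mul_one]
      have := hc 0 0
      rwa [add_zero, hα0] at this
    exact ((huIsUnit 0).mul_left_cancel h).symm
  have hu'IsUnit : ∀ t, IsUnit (u' t) := fun t =>
    ⟨⟨u' t, star (u' t), (Unitary.mem_iff.mp (hu' t)).2, (Unitary.mem_iff.mp (hu' t)).1⟩, rfl⟩
  have hu'0 : u' 0 = 1 := by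
    have h : u' 0 * 1 = u' 0 * u' 0 := by
      rw [mul_one]
      have := hc' 0 0
      rwa [add_zero, hα0] at this
    exact ((hu'IsUnit 0).mul_left_cancel h).symm
  -- the central unitaries
  set w : ℝ → A := fun t => star (u t) * u' t with hw
  have hwu : ∀ t, w t ∈ unitary A := fun t =>
    mul_mem (Unitary.star_mem (hu t)) (hu' t)
  have hwc : Continuous w := (continuous_star.comp hucont).mul hu'cont
  have hwcentral : ∀ t y, w t * y = y * w t := by
    intro t y
    have h := had t ((α t).symm y)
    rw [StarAlgEquiv.apply_symm_apply] at h
    have key := congrArg (fun b => star (u t) * b * u' t) h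
    simp only [← mul_assoc] at key
    rw [(Unitary.mem_iff.mp (hu t)).1, one_mul] at key
    rw [mul_assoc _ (star (u' t)) (u' t), (Unitary.mem_iff.mp (hu' t)).1, mul_one] at key
    rw [hw]
    simp only []
    rw [← mul_assoc]
    exact key.symm
  -- the scalar character
  obtain ⟨φ, -, hφ1⟩ := exists_dual_vector ℂ (1 : A) (by simp)
  rw [norm_one] at hφ1
  set χ : ℝ → ℂ := fun t => φ (w t) with hχ
  have hwχ : ∀ t, w t = χ t • 1 := by
    intro t
    obtain ⟨μ, hμ⟩ := central_scalar hsimple (w t) (hwcentral t)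
    have : χ t = μ := by
      rw [hχ]
      simp only []
      rw [hμ, map_smul, hφ1, smul_eq_mul]; norm_num
    rw [this, hμ]
  have hχcont : Continuous χ := φ.continuous.comp hwc
  have hχ0 : χ 0 = 1 := by
    have hw0 : w 0 = 1 := by rw [hw]; simp [hu0, hu'0]
    rw [hχ]; simp only []; rw [hw0]; simpa using hφ1
  have hχnorm : ∀ t, ‖χ t‖ = 1 := by
    intro t
    have h1 : ‖w t‖ = 1 := CStarRing.norm_of_mem_unitary (hwu t)
    rw [hwχ t, norm_smul, norm_one, mul_one] at h1
    exact h1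
  have hχmul : ∀ s t, χ (s + t) = χ s * χ t := by
    intro s t
    have hws : w (s + t) = (χ s * χ t) • 1 := by
      rw [hw]
      simp only []
      rw [hc s t, hc' s t, star_mul]
      calc star (α s (u t)) * star (u s) * (u' s * α s (u' t))
          = star (α s (u t)) * (star (u s) * u' s) * α s (u' t) := by
            simp only [mul_assoc]
        _ = star (α s (u t)) * (χ s • 1) * α s (u' t) := by rw [← hwχ s]
        _ = χ s • (star (α s (u t)) * α s (u' t)) := by
            simp [mul_smul_comm, smul_mul_assoc]
        _ = χ s • (α s (star (u t) * u' t)) := by rw [map_mul, map_star]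
        _ = χ s • (α s (χ t • 1)) := by rw [← hwχ t]
        _ = (χ s * χ t) • 1 := by rw [map_smul, map_one, smul_smul]
    have := congrArg φ hws
    rw [map_smul, hφ1, smul_eq_mul] at this
    simpa using this
  obtain ⟨p, hp⟩ := char_classify χ hχcont hχ0 hχmul hχnorm
  refine ⟨p, fun t => ?_⟩
  have : u t * w t = u' t := by
    rw [hw]
    simp only []
    rw [← mul_assoc, (Unitary.mem_iff.mp (hu t)).2, one_mul]
  rw [← this, hwχ t, mul_smul_comm, mul_one, hp t]
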